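/- If m = 3 and q = (α, β, γ) ∈ [1,2]³ with 1/α + 1/β + 1/γ = 2, then any constant C satisfying the mixed-norm trilinear inequality with exponents (α, β, γ) for all real trilinear forms satisfies C ≥ 2^{(2αγ + αβ + βγ - 2αβγ)/(αβγ)}. -/
import Mathlib

/-- The canonical basis vectors of `ℝⁿ`. -/
def e (n : ℕ) (j : Fin n) : Fin n → ℝ := fun i => if i = j then 1 else 0

/-- The supremum norm of an `m`-linear form on `(ℓ∞ⁿ)^m`. -/
noncomputable def supNorm (m n : ℕ)
    (T : MultilinearMap ℝ (fun _ : Fin m => (Fin n → ℝ)) ℝ) : ℝ :=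
  sSup {v : ℝ | ∃ x : Fin m → Fin n → ℝ, (∀ i, ‖x i‖ ≤ 1) ∧ v = |T x|}

noncomputable def f3 (x : Fin 3 → (Fin 4 → ℝ)) : ℝ :=
  (x 0 0 + x 0 1) * (x 1 0 * x 2 0 + x 1 0 * x 2 1 + x 1 1 * x 2 0 - x 1 1 * x 2 1)
  + (x 0 0 - x 0 1) * (x 1 2 * x 2 2 + x 1 2 * x 2 3 + x 1 3 * x 2 2 - x 1 3 * x 2 3)

noncomputable def T3 : MultilinearMap ℝ (fun _ : Fin 3 => (Fin 4 → ℝ)) ℝ :=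
  { toFun := f3
    map_update_add' := by
      intro inst x i a b
      fin_cases i <;> simp [f3, Function.update_apply, Fin.ext_iff] <;> ring
    map_update_smul' := by
      intro inst x i c a
      fin_cases i <;> simp [f3, Function.update_apply, Fin.ext_iff] <;> ring }

@[simp] lemma T3_apply (x : Fin 3 → (Fin 4 → ℝ)) : T3 x = f3 x := rfl

lemma two_abs (c d : ℝ) (hc : |c| ≤ 1) (hd : |d| ≤ 1) : |c + d| + |c - d| ≤ 2 := by
  have h1 := abs_le.mp hc
  have h2 := abs_le.mp hd
  rcases abs_cases (c + d) with ⟨h, _⟩ | ⟨h, _⟩ <;>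
    rcases abs_cases (c - d) with ⟨h', _⟩ | ⟨h', _⟩ <;> linarith

lemma quad (a b c d : ℝ) (ha : |a| ≤ 1) (hb : |b| ≤ 1) (hc : |c| ≤ 1) (hd : |d| ≤ 1) :
    |a * c + a * d + b * c - b * d| ≤ 2 := by
  have key : a * c + a * d + b * c - b * d = a * (c + d) + b * (c - d) := by ring
  calc |a * c + a * d + b * c - b * d| = |a * (c + d) + b * (c - d)| := by rw [key]
    _ ≤ |a * (c + d)| + |b * (c - d)| := abs_add_le _ _
    _ = |a| * |c + d| + |b| * |c - d| := by rw [abs_mul, abs_mul]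
    _ ≤ 1 * |c + d| + 1 * |c - d| := by
        have := abs_nonneg (c + d); have := abs_nonneg (c - d); nlinarith
    _ = |c + d| + |c - d| := by ring
    _ ≤ 2 := two_abs c d hc hd

lemma T3_bound (x : Fin 3 → Fin 4 → ℝ) (hx : ∀ i, ‖x i‖ ≤ 1) : |T3 x| ≤ 4 := by
  have hxij : ∀ i j, |x i j| ≤ 1 := by
    intro i j
    calc |x i j| = ‖x i j‖ := (Real.norm_eq_abs _).symm
      _ ≤ ‖x i‖ := norm_le_pi_norm (x i) j
      _ ≤ 1 := hx i
  have hP : |x 1 0 * x 2 0 + x 1 0 * x 2 1 + x 1 1 * x 2 0 - x 1 1 * x 2 1| ≤ 2 :=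
    quad _ _ _ _ (hxij 1 0) (hxij 1 1) (hxij 2 0) (hxij 2 1)
  have hQ : |x 1 2 * x 2 2 + x 1 2 * x 2 3 + x 1 3 * x 2 2 - x 1 3 * x 2 3| ≤ 2 :=
    quad _ _ _ _ (hxij 1 2) (hxij 1 3) (hxij 2 2) (hxij 2 3)
  have hAB : |x 0 0 + x 0 1| + |x 0 0 - x 0 1| ≤ 2 := two_abs _ _ (hxij 0 0) (hxij 0 1)
  rw [T3_apply]
  calc |f3 x| ≤ |(x 0 0 + x 0 1) * (x 1 0 * x 2 0 + x 1 0 * x 2 1 + x 1 1 * x 2 0 - x 1 1 * x 2 1)|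
        + |(x 0 0 - x 0 1) * (x 1 2 * x 2 2 + x 1 2 * x 2 3 + x 1 3 * x 2 2 - x 1 3 * x 2 3)| :=
      abs_add_le _ _
    _ = |x 0 0 + x 0 1| * |x 1 0 * x 2 0 + x 1 0 * x 2 1 + x 1 1 * x 2 0 - x 1 1 * x 2 1|
        + |x 0 0 - x 0 1| * |x 1 2 * x 2 2 + x 1 2 * x 2 3 + x 1 3 * x 2 2 - x 1 3 * x 2 3| := by
      rw [abs_mul, abs_mul]
    _ ≤ 4 := by
      have h1 := abs_nonneg (x 0 0 + x 0 1)
      have h2 := abs_nonneg (x 0 0 - x 0 1)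
      have h3 := abs_nonneg (x 1 0 * x 2 0 + x 1 0 * x 2 1 + x 1 1 * x 2 0 - x 1 1 * x 2 1)
      have h4 := abs_nonneg (x 1 2 * x 2 2 + x 1 2 * x 2 3 + x 1 3 * x 2 2 - x 1 3 * x 2 3)
      nlinarith

lemma my_sup_le : supNorm 3 4 T3 ≤ 4 := by
  apply Real.sSup_le
  · rintro v ⟨x, hx, rfl⟩
    exact T3_bound x hx
  · norm_num

lemma my_sup_nonneg : 0 ≤ supNorm 3 4 T3 := by
  apply le_csSup
  · exact ⟨4, by rintro v ⟨x, hx, rfl⟩; exact T3_bound x hx⟩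
  · exact ⟨0, fun i => by simp, by simp [f3]⟩

/-- Trilinear lower bound: for `(α,β,γ) ∈ [1,2]³` with `1/α+1/β+1/γ = 2`, any
constant `C` in the mixed-norm trilinear inequality with exponents `(α,β,γ)`
satisfies `C ≥ 2^{(2αγ + αβ + βγ - 2αβγ)/(αβγ)}`. -/
theorem stmt_15 (α β γ : ℝ) (hα : α ∈ Set.Icc (1:ℝ) 2) (hβ : β ∈ Set.Icc (1:ℝ) 2)
    (hγ : γ ∈ Set.Icc (1:ℝ) 2) (hsum : 1/α + 1/β + 1/γ = 2) (C : ℝ)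
    (hC : ∀ n : ℕ, ∀ T : MultilinearMap ℝ (fun _ : Fin 3 => (Fin n → ℝ)) ℝ,
      (∑ j₁ : Fin n, (∑ j₂ : Fin n, (∑ j₃ : Fin n,
          |T ![e n j₁, e n j₂, e n j₃]| ^ γ) ^ (β / γ)) ^ (α / β)) ^ (1 / α)
        ≤ C * supNorm 3 n T) :
    (2:ℝ) ^ ((2*α*γ + α*β + β*γ - 2*α*β*γ) / (α*β*γ)) ≤ C := by
  have hα0 : (0:ℝ) < α := lt_of_lt_of_le one_pos hα.1
  have hβ0 : (0:ℝ) < β := lt_of_lt_of_le one_pos hβ.1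
  have hγ0 : (0:ℝ) < γ := lt_of_lt_of_le one_pos hγ.1
  have hγne : γ ≠ 0 := ne_of_gt hγ0
  have hβγne : β / γ ≠ 0 := by positivity
  have hαβne : α / β ≠ 0 := by positivity
  -- inner sums
  have h3 : ∀ j₁ j₂ : Fin 4, (∑ j₃ : Fin 4, |T3 ![e 4 j₁, e 4 j₂, e 4 j₃]| ^ γ)
      = if j₁.val ≤ 1 then 2 else 0 := by
    intro j₁ j₂
    fin_cases j₁ <;> fin_cases j₂ <;>
      simp [Fin.sum_univ_four, f3, e, Fin.ext_iff,
        show ((3:Fin 4):ℕ)=3 from rfl, show ((2:Fin 4):ℕ)=2 from rfl,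
        show ((1:Fin 4):ℕ)=1 from rfl, show ((0:Fin 4):ℕ)=0 from rfl] <;>
      norm_num [Real.zero_rpow hγne, Real.one_rpow]
  have h2 : ∀ j₁ : Fin 4, (∑ j₂ : Fin 4, (∑ j₃ : Fin 4,
      |T3 ![e 4 j₁, e 4 j₂, e 4 j₃]| ^ γ) ^ (β / γ)) ^ (α / β)
      = if j₁.val ≤ 1 then (4 * (2:ℝ) ^ (β/γ)) ^ (α/β) else 0 := by
    intro j₁
    rw [Fin.sum_univ_four, h3 j₁ 0, h3 j₁ 1, h3 j₁ 2, h3 j₁ 3]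
    by_cases h : j₁.val ≤ 1 <;>
      simp only [h, if_true, if_false] <;>
      [skip; rw [Real.zero_rpow hβγne]]
    · congr 1
      ring
    · norm_num
      exact Real.zero_rpow hαβne
  have hval : (∑ j₁ : Fin 4, (∑ j₂ : Fin 4, (∑ j₃ : Fin 4,
      |T3 ![e 4 j₁, e 4 j₂, e 4 j₃]| ^ γ) ^ (β / γ)) ^ (α / β))
      = 2 * (4 * (2:ℝ) ^ (β/γ)) ^ (α/β) := by
    rw [Fin.sum_univ_four, h2 0, h2 1, h2 2, h2 3]
    norm_num [show ((3:Fin 4):ℕ)=3 from rfl, show ((2:Fin 4):ℕ)=2 from rfl,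
      show ((1:Fin 4):ℕ)=1 from rfl, show ((0:Fin 4):ℕ)=0 from rfl]
    ring
  have key := hC 4 T3
  rw [hval] at key
  -- rewrite LHS as a power of 2
  have h4 : (4:ℝ) * (2:ℝ) ^ (β/γ) = (2:ℝ) ^ (2 + β/γ) := by
    have he : (2:ℝ) + β/γ = 1 + (1 + β/γ) := by ring
    rw [he, Real.rpow_add two_pos, Real.rpow_one, Real.rpow_add two_pos, Real.rpow_one]
    ring
  have h5 : (2:ℝ) * (2:ℝ) ^ ((2 + β/γ) * (α/β)) = (2:ℝ) ^ (1 + (2 + β/γ) * (α/β)) := by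
    rw [Real.rpow_add two_pos, Real.rpow_one]
  rw [h4, ← Real.rpow_mul (by norm_num : (0:ℝ) ≤ 2), h5,
    ← Real.rpow_mul (by norm_num : (0:ℝ) ≤ 2)] at key
  have hexp1 : (1 + (2 + β/γ) * (α/β)) * (1/α) = 2 + 1/β := by
    have h : (1 + (2 + β/γ) * (α/β)) * (1/α) = 1/α + (1/β + 1/β) + 1/γ := by
      field_simp
      ring
    rw [h]
    linarith
  rw [hexp1] at key
  have hexp2 : (2*α*γ + α*β + β*γ - 2*α*β*γ) / (α*β*γ) = 1/β := by
    have h : (2*α*γ + α*β + β*γ - 2*α*β*γ) / (α*β*γ) = (1/β + 1/β) + 1/γ + 1/α - 2 := by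
      field_simp
      ring
    rw [h]
    linarith
  rw [hexp2]
  -- conclude
  have hsple := my_sup_le
  have hspnn := my_sup_nonneg
  have hsplit : (2:ℝ) ^ ((2:ℝ) + 1/β) = 4 * (2:ℝ) ^ (1/β) := by
    have he : (2:ℝ) + 1/β = 1 + (1 + 1/β) := by ring
    rw [he, Real.rpow_add two_pos, Real.rpow_one, Real.rpow_add two_pos, Real.rpow_one]
    ring
  rw [hsplit] at key
  have hpos : (0:ℝ) < (2:ℝ) ^ (1/β) := Real.rpow_pos_of_pos two_pos _
  have hCpos : 0 < C := by
    by_contra h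
    push_neg at h
    nlinarith [mul_nonpos_of_nonpos_of_nonneg h hspnn]
  nlinarith [mul_le_mul_of_nonneg_left hsple hCpos.le]
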